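/- arXiv:1910.02305 — 2 statements merged into one kernel-verified Lean document; each statement's English description precedes it below -/
import Mathlib

section
/- For any incidence hypergraph G, the hypergraph G̃ obtained by adding one new vertex ∗, one new edge ⋆, and for every vertex-edge pair (v,e) of G̃ one new incidence from v to e, together with the inclusion η_G : G → G̃, is a partial morphism representer: for any monomorphism φ : H → K and any morphism ψ : H → G, there is a unique morphism ψ̂ : K → G̃ such that the square with φ, ψ, ψ̂, η_G is a pullback. -/
open CategoryTheory Limits

/-- An incidence hypergraph: vertices, edges, incidences, and two structure maps. -/
structure IncHG : Type 1 where
  V : Type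
  E : Type
  I : Type
  vmap : I → V
  emap : I → E

/-- A homomorphism of incidence hypergraphs. -/
@[ext]
structure IncHG.Hom (G H : IncHG) where
  fV : G.V → H.V
  fE : G.E → H.E
  fI : G.I → H.I
  comm_v : ∀ i, H.vmap (fI i) = fV (G.vmap i)
  comm_e : ∀ i, H.emap (fI i) = fE (G.emap i)

instance : Category IncHG where
  Hom := IncHG.Hom
  id G := ⟨id, id, id, fun _ => rfl, fun _ => rfl⟩
  comp f g := ⟨g.fV ∘ f.fV, g.fE ∘ f.fE, g.fI ∘ f.fI,
    fun i => by simp [IncHG.Hom.comm_v], fun i => by simp [IncHG.Hom.comm_e]⟩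
  id_comp f := rfl
  comp_id f := rfl
  assoc f g h := rfl

/-- The extension `G̃` of `G`: one new vertex (`none`), one new edge (`none`), and
one new incidence `Sum.inr (v, e)` for every vertex-edge pair `(v, e)` of `G̃`. -/
def tildeIH (G : IncHG) : IncHG where
  V := Option G.V
  E := Option G.E
  I := G.I ⊕ (Option G.V × Option G.E)
  vmap := fun a => match a with | .inl i => some (G.vmap i) | .inr p => p.1
  emap := fun a => match a with | .inl i => some (G.emap i) | .inr p => p.2

/-- The canonical inclusion `η_G : G ⟶ G̃`. -/
def etaIH (G : IncHG) : G ⟶ tildeIH G :=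
  ⟨some, some, Sum.inl, fun _ => rfl, fun _ => rfl⟩

/- ### Auxiliary material -/

@[simp] lemma IncHG.comp_fV {A B C : IncHG} (f : A ⟶ B) (g : B ⟶ C) (x : A.V) :
    (f ≫ g).fV x = g.fV (f.fV x) := rfl
@[simp] lemma IncHG.comp_fE {A B C : IncHG} (f : A ⟶ B) (g : B ⟶ C) (x : A.E) :
    (f ≫ g).fE x = g.fE (f.fE x) := rfl
@[simp] lemma IncHG.comp_fI {A B C : IncHG} (f : A ⟶ B) (g : B ⟶ C) (x : A.I) :
    (f ≫ g).fI x = g.fI (f.fI x) := rfl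

lemma IncHG.hom_ext {A B : IncHG} {f g : A ⟶ B} (hV : f.fV = g.fV)
    (hE : f.fE = g.fE) (hI : f.fI = g.fI) : f = g := IncHG.Hom.ext hV hE hI

/-- One-vertex test object. -/
def unitV : IncHG := ⟨PUnit, PEmpty, PEmpty, PEmpty.elim, PEmpty.elim⟩
def homV (A : IncHG) (v : A.V) : unitV ⟶ A :=
  ⟨fun _ => v, PEmpty.elim, PEmpty.elim, fun i => i.elim, fun i => i.elim⟩

/-- One-edge test object. -/
def unitE : IncHG := ⟨PEmpty, PUnit, PEmpty, PEmpty.elim, PEmpty.elim⟩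
def homE (A : IncHG) (e : A.E) : unitE ⟶ A :=
  ⟨PEmpty.elim, fun _ => e, PEmpty.elim, fun i => i.elim, fun i => i.elim⟩

/-- One-incidence test object. -/
def unitI : IncHG := ⟨PUnit, PUnit, PUnit, fun _ => ⟨⟩, fun _ => ⟨⟩⟩
def homI (A : IncHG) (i : A.I) : unitI ⟶ A :=
  ⟨fun _ => A.vmap i, fun _ => A.emap i, fun _ => i, fun _ => rfl, fun _ => rfl⟩

lemma mono_injV {A B : IncHG} (φ : A ⟶ B) [Mono φ] : Function.Injective φ.fV := by
  intro x y hxy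
  have h : homV A x ≫ φ = homV A y ≫ φ := by
    apply IncHG.hom_ext
    · funext _; exact hxy
    · funext i; exact i.elim
    · funext i; exact i.elim
  have h2 := (cancel_mono φ).mp h
  exact congrArg (fun m : unitV ⟶ A => m.fV PUnit.unit) h2

lemma mono_injE {A B : IncHG} (φ : A ⟶ B) [Mono φ] : Function.Injective φ.fE := by
  intro x y hxy
  have h : homE A x ≫ φ = homE A y ≫ φ := by
    apply IncHG.hom_ext
    · funext i; exact i.elim
    · funext _; exact hxy
    · funext i; exact i.elim
  have h2 := (cancel_mono φ).mp h
  exact congrArg (fun m : unitE ⟶ A => m.fE PUnit.unit) h2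

lemma mono_injI {A B : IncHG} (φ : A ⟶ B) [Mono φ] : Function.Injective φ.fI := by
  intro x y hxy
  have h : homI A x ≫ φ = homI A y ≫ φ := by
    apply IncHG.hom_ext
    · funext _
      show φ.fV (A.vmap x) = φ.fV (A.vmap y)
      rw [← φ.comm_v, ← φ.comm_v, hxy]
    · funext _
      show φ.fE (A.emap x) = φ.fE (A.emap y)
      rw [← φ.comm_e, ← φ.comm_e, hxy]
    · funext _; exact hxy
  have h2 := (cancel_mono φ).mp h
  exact congrArg (fun m : unitI ⟶ A => m.fI PUnit.unit) h2

section Hat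

variable {G H K : IncHG} (φ : H ⟶ K) (ψ : H ⟶ G)

open Classical in
noncomputable def hatV : K.V → Option G.V :=
  fun k => if h : ∃ x, φ.fV x = k then some (ψ.fV h.choose) else none

open Classical in
noncomputable def hatE : K.E → Option G.E :=
  fun k => if h : ∃ x, φ.fE x = k then some (ψ.fE h.choose) else none

open Classical in
noncomputable def hatI : K.I → (tildeIH G).I :=
  fun k => if h : ∃ x, φ.fI x = k then Sum.inl (ψ.fI h.choose)
    else Sum.inr (hatV φ ψ (K.vmap k), hatE φ ψ (K.emap k))

lemma hatV_apply (injV : Function.Injective φ.fV) (x : H.V) :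
    hatV φ ψ (φ.fV x) = some (ψ.fV x) := by
  have h : ∃ y, φ.fV y = φ.fV x := ⟨x, rfl⟩
  rw [hatV, dif_pos h, injV h.choose_spec]

lemma hatV_none {k : K.V} (h : ¬ ∃ x, φ.fV x = k) : hatV φ ψ k = none := dif_neg h

lemma hatE_apply (injE : Function.Injective φ.fE) (x : H.E) :
    hatE φ ψ (φ.fE x) = some (ψ.fE x) := by
  have h : ∃ y, φ.fE y = φ.fE x := ⟨x, rfl⟩
  rw [hatE, dif_pos h, injE h.choose_spec]

lemma hatE_none {k : K.E} (h : ¬ ∃ x, φ.fE x = k) : hatE φ ψ k = none := dif_neg h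

lemma hatI_apply (injI : Function.Injective φ.fI) (x : H.I) :
    hatI φ ψ (φ.fI x) = Sum.inl (ψ.fI x) := by
  have h : ∃ y, φ.fI y = φ.fI x := ⟨x, rfl⟩
  exact (dif_pos h).trans (by rw [injI h.choose_spec])

lemma hatI_none {k : K.I} (h : ¬ ∃ x, φ.fI x = k) :
    hatI φ ψ k = Sum.inr (hatV φ ψ (K.vmap k), hatE φ ψ (K.emap k)) := dif_neg h

/-- The candidate classifying morphism. -/
noncomputable def psiHat (injV : Function.Injective φ.fV)
    (injE : Function.Injective φ.fE) (injI : Function.Injective φ.fI) :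
    K ⟶ tildeIH G where
  fV := hatV φ ψ
  fE := hatE φ ψ
  fI := hatI φ ψ
  comm_v := by
    intro k
    by_cases h : ∃ x, φ.fI x = k
    · obtain ⟨x, rfl⟩ := h
      rw [hatI_apply φ ψ injI]
      show some (G.vmap (ψ.fI x)) = hatV φ ψ (K.vmap (φ.fI x))
      rw [φ.comm_v, hatV_apply φ ψ injV, ψ.comm_v]
    · rw [hatI_none φ ψ h]
      rfl
  comm_e := by
    intro k
    by_cases h : ∃ x, φ.fI x = k
    · obtain ⟨x, rfl⟩ := h
      rw [hatI_apply φ ψ injI]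
      show some (G.emap (ψ.fI x)) = hatE φ ψ (K.emap (φ.fI x))
      rw [φ.comm_e, hatE_apply φ ψ injE, ψ.comm_e]
    · rw [hatI_none φ ψ h]
      rfl

variable (injV : Function.Injective φ.fV) (injE : Function.Injective φ.fE)
  (injI : Function.Injective φ.fI)

lemma psiHat_w : ψ ≫ etaIH G = φ ≫ psiHat φ ψ injV injE injI := by
  apply IncHG.hom_ext
  · funext x
    exact (hatV_apply φ ψ injV x).symm
  · funext x
    exact (hatE_apply φ ψ injE x).symm
  · funext x
    exact (hatI_apply φ ψ injI x).symm

lemma cone_extractV {W : IncHG} (a : W ⟶ G) (b : W ⟶ K)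
    (w : a ≫ etaIH G = b ≫ psiHat φ ψ injV injE injI) (x : W.V) :
    ∃ h, φ.fV h = b.fV x ∧ ψ.fV h = a.fV x := by
  have h1 : (some (a.fV x) : Option G.V) = hatV φ ψ (b.fV x) :=
    congrArg (fun m : W ⟶ tildeIH G => m.fV x) w
  by_cases h : ∃ y, φ.fV y = b.fV x
  · refine ⟨h.choose, h.choose_spec, ?_⟩
    rw [hatV, dif_pos h] at h1
    exact (Option.some_injective _ h1).symm
  · rw [hatV_none φ ψ h] at h1
    exact absurd h1 (Option.some_ne_none _)

lemma cone_extractE {W : IncHG} (a : W ⟶ G) (b : W ⟶ K)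
    (w : a ≫ etaIH G = b ≫ psiHat φ ψ injV injE injI) (x : W.E) :
    ∃ h, φ.fE h = b.fE x ∧ ψ.fE h = a.fE x := by
  have h1 : (some (a.fE x) : Option G.E) = hatE φ ψ (b.fE x) :=
    congrArg (fun m : W ⟶ tildeIH G => m.fE x) w
  by_cases h : ∃ y, φ.fE y = b.fE x
  · refine ⟨h.choose, h.choose_spec, ?_⟩
    rw [hatE, dif_pos h] at h1
    exact (Option.some_injective _ h1).symm
  · rw [hatE_none φ ψ h] at h1
    exact absurd h1 (Option.some_ne_none _)

lemma cone_extractI {W : IncHG} (a : W ⟶ G) (b : W ⟶ K)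
    (w : a ≫ etaIH G = b ≫ psiHat φ ψ injV injE injI) (x : W.I) :
    ∃ h, φ.fI h = b.fI x ∧ ψ.fI h = a.fI x := by
  have h1 : (Sum.inl (a.fI x) : (tildeIH G).I) = hatI φ ψ (b.fI x) :=
    congrArg (fun m : W ⟶ tildeIH G => m.fI x) w
  by_cases h : ∃ y, φ.fI y = b.fI x
  · refine ⟨h.choose, h.choose_spec, ?_⟩
    have h1 := h1.trans (dif_pos h)
    exact (Sum.inl_injective h1).symm
  · rw [hatI_none φ ψ h] at h1
    exact absurd h1 (Sum.inl_ne_inr)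

/-- The lift of a commuting cone through `H`. -/
noncomputable def coneLift {W : IncHG} (a : W ⟶ G) (b : W ⟶ K)
    (w : a ≫ etaIH G = b ≫ psiHat φ ψ injV injE injI) : W ⟶ H where
  fV := fun x => (cone_extractV φ ψ injV injE injI a b w x).choose
  fE := fun x => (cone_extractE φ ψ injV injE injI a b w x).choose
  fI := fun x => (cone_extractI φ ψ injV injE injI a b w x).choose
  comm_v := by
    intro i
    apply injV
    rw [(cone_extractV φ ψ injV injE injI a b w (W.vmap i)).choose_spec.1,
      ← φ.comm_v, (cone_extractI φ ψ injV injE injI a b w i).choose_spec.1, b.comm_v]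
  comm_e := by
    intro i
    apply injE
    rw [(cone_extractE φ ψ injV injE injI a b w (W.emap i)).choose_spec.1,
      ← φ.comm_e, (cone_extractI φ ψ injV injE injI a b w i).choose_spec.1, b.comm_e]

lemma coneLift_fst {W : IncHG} (a : W ⟶ G) (b : W ⟶ K)
    (w : a ≫ etaIH G = b ≫ psiHat φ ψ injV injE injI) :
    coneLift φ ψ injV injE injI a b w ≫ ψ = a := by
  apply IncHG.hom_ext
  · funext x; exact (cone_extractV φ ψ injV injE injI a b w x).choose_spec.2
  · funext x; exact (cone_extractE φ ψ injV injE injI a b w x).choose_spec.2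
  · funext x; exact (cone_extractI φ ψ injV injE injI a b w x).choose_spec.2

lemma coneLift_snd {W : IncHG} (a : W ⟶ G) (b : W ⟶ K)
    (w : a ≫ etaIH G = b ≫ psiHat φ ψ injV injE injI) :
    coneLift φ ψ injV injE injI a b w ≫ φ = b := by
  apply IncHG.hom_ext
  · funext x; exact (cone_extractV φ ψ injV injE injI a b w x).choose_spec.1
  · funext x; exact (cone_extractE φ ψ injV injE injI a b w x).choose_spec.1
  · funext x; exact (cone_extractI φ ψ injV injE injI a b w x).choose_spec.1

end Hat

/-- `G̃` with `η_G` represents partial morphisms. -/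
theorem tildeIH_partialMorphismRepresenter (G H K : IncHG) (φ : H ⟶ K) [Mono φ]
    (ψ : H ⟶ G) :
    ∃! ψh : K ⟶ tildeIH G, IsPullback ψ φ (etaIH G) ψh := by
  have injV := mono_injV φ
  have injE := mono_injE φ
  have injI := mono_injI φ
  refine ⟨psiHat φ ψ injV injE injI, ?_, ?_⟩
  · -- it is a pullback
    refine IsPullback.of_isLimit' ⟨psiHat_w φ ψ injV injE injI⟩ ?_
    refine PullbackCone.IsLimit.mk _ ?_ ?_ ?_ ?_
    · intro s
      exact coneLift φ ψ injV injE injI s.fst s.snd s.condition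
    · intro s
      exact coneLift_fst φ ψ injV injE injI s.fst s.snd s.condition
    · intro s
      exact coneLift_snd φ ψ injV injE injI s.fst s.snd s.condition
    · intro s m hm1 hm2
      have h := coneLift_snd φ ψ injV injE injI s.fst s.snd s.condition
      exact (cancel_mono φ).mp (hm2.trans h.symm)
  · -- uniqueness
    intro ψh hpb
    have hw : ψ ≫ etaIH G = φ ≫ ψh := hpb.w
    have hV : ψh.fV = hatV φ ψ := by
      funext k
      by_cases h : ∃ x, φ.fV x = k
      · obtain ⟨x, rfl⟩ := h
        have h2 : (some (ψ.fV x) : Option G.V) = ψh.fV (φ.fV x) :=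
          congrArg (fun m : H ⟶ tildeIH G => m.fV x) hw
        rw [← h2, hatV_apply φ ψ injV]
      · rw [hatV_none φ ψ h]
        rcases hk : ψh.fV k with _ | g
        · rfl
        · exfalso
          have hsq : homV G g ≫ etaIH G = homV K k ≫ ψh := by
            apply IncHG.hom_ext
            · funext _; exact hk.symm
            · funext i; exact i.elim
            · funext i; exact i.elim
          have hl := hpb.lift_snd (homV G g) (homV K k) hsq
          exact h ⟨(hpb.lift (homV G g) (homV K k) hsq).fV PUnit.unit,
            congrArg (fun m : unitV ⟶ K => m.fV PUnit.unit) hl⟩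
    have hE : ψh.fE = hatE φ ψ := by
      funext k
      by_cases h : ∃ x, φ.fE x = k
      · obtain ⟨x, rfl⟩ := h
        have h2 : (some (ψ.fE x) : Option G.E) = ψh.fE (φ.fE x) :=
          congrArg (fun m : H ⟶ tildeIH G => m.fE x) hw
        rw [← h2, hatE_apply φ ψ injE]
      · rw [hatE_none φ ψ h]
        rcases hk : ψh.fE k with _ | g
        · rfl
        · exfalso
          have hsq : homE G g ≫ etaIH G = homE K k ≫ ψh := by
            apply IncHG.hom_ext
            · funext i; exact i.elim
            · funext _; exact hk.symm
            · funext i; exact i.elim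
          have hl := hpb.lift_snd (homE G g) (homE K k) hsq
          exact h ⟨(hpb.lift (homE G g) (homE K k) hsq).fE PUnit.unit,
            congrArg (fun m : unitE ⟶ K => m.fE PUnit.unit) hl⟩
    have hI : ψh.fI = hatI φ ψ := by
      funext k
      by_cases h : ∃ x, φ.fI x = k
      · obtain ⟨x, rfl⟩ := h
        have h2 : (Sum.inl (ψ.fI x) : (tildeIH G).I) = ψh.fI (φ.fI x) :=
          congrArg (fun m : H ⟶ tildeIH G => m.fI x) hw
        rw [← h2, hatI_apply φ ψ injI]
      · rw [hatI_none φ ψ h]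
        rcases hk : ψh.fI k with g | p
        · exfalso
          have hsq : homI G g ≫ etaIH G = homI K k ≫ ψh := by
            apply IncHG.hom_ext
            · funext _
              show some (G.vmap g) = ψh.fV (K.vmap k)
              rw [← ψh.comm_v k, hk]
              rfl
            · funext _
              show some (G.emap g) = ψh.fE (K.emap k)
              rw [← ψh.comm_e k, hk]
              rfl
            · funext _
              exact hk.symm
          have hl := hpb.lift_snd (homI G g) (homI K k) hsq
          exact h ⟨(hpb.lift (homI G g) (homI K k) hsq).fI PUnit.unit,
            congrArg (fun m : unitI ⟶ K => m.fI PUnit.unit) hl⟩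
        · obtain ⟨v, e⟩ := p
          have h1 : v = hatV φ ψ (K.vmap k) := by
            have hc := ψh.comm_v k
            rw [hk] at hc
            rw [← hV]
            exact hc
          have h2 : e = hatE φ ψ (K.emap k) := by
            have hc := ψh.comm_e k
            rw [hk] at hc
            rw [← hE]
            exact hc
          rw [h1, h2]
    exact IncHG.hom_ext hV hE hI
end

section
/- For any incidence hypergraph G, the loading L(G) — obtained from G by adding a vertex if V(G) is empty, adding an edge if E(G) is empty, and adding exactly one new incidence between each vertex-edge pair (v,e) with inc_G(v,e) = ∅ — together with the inclusion j_G : G → L(G), is an injective envelope of G: j_G is an essential monomorphism and L(G) is injective with respect to monomorphisms. -/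
open CategoryTheory Limits

/-- The vertex set of the loading: `G`'s vertices, plus one new vertex exactly
when `V(G)` is empty. -/
def loadV (G : IncHG) : Type := G.V ⊕ PLift (IsEmpty G.V)

/-- The edge set of the loading: `G`'s edges, plus one new edge exactly when `E(G)`
is empty. -/
def loadE (G : IncHG) : Type := G.E ⊕ PLift (IsEmpty G.E)

/-- The loading `L(G)`: add a vertex if `V(G)` is empty, an edge if `E(G)` is empty,
and exactly one new incidence for each vertex-edge pair having no incidence. -/
def loadIH (G : IncHG) : IncHG where
  V := loadV G
  E := loadE G
  I := G.I ⊕ {p : loadV G × loadE G //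
        ¬ ∃ i : G.I, Sum.inl (G.vmap i) = p.1 ∧ Sum.inl (G.emap i) = p.2}
  vmap := fun a => match a with | .inl i => .inl (G.vmap i) | .inr p => p.1.1
  emap := fun a => match a with | .inl i => .inl (G.emap i) | .inr p => p.1.2

/-- The canonical inclusion `j_G : G ⟶ L(G)`. -/
def jIH (G : IncHG) : G ⟶ loadIH G :=
  ⟨Sum.inl, Sum.inl, Sum.inl, fun _ => rfl, fun _ => rfl⟩
/-! Auxiliary lemmas -/

lemma comp_fV' {G H K : IncHG} (f : G ⟶ H) (g : H ⟶ K) : (f ≫ g).fV = g.fV ∘ f.fV := rfl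
lemma comp_fE' {G H K : IncHG} (f : G ⟶ H) (g : H ⟶ K) : (f ≫ g).fE = g.fE ∘ f.fE := rfl
lemma comp_fI' {G H K : IncHG} (f : G ⟶ H) (g : H ⟶ K) : (f ≫ g).fI = g.fI ∘ f.fI := rfl

lemma mono_of_inj {G H : IncHG} (f : G ⟶ H)
    (hV : Function.Injective f.fV) (hE : Function.Injective f.fE)
    (hI : Function.Injective f.fI) : CategoryTheory.Mono f := by
  refine ⟨fun {Z} g h hgh => ?_⟩
  refine IncHG.Hom.ext ?_ ?_ ?_
  · exact funext fun x => hV (congrFun (congrArg IncHG.Hom.fV hgh) x)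
  · exact funext fun x => hE (congrFun (congrArg IncHG.Hom.fE hgh) x)
  · exact funext fun x => hI (congrFun (congrArg IncHG.Hom.fI hgh) x)

lemma injV_of_mono {G H : IncHG} (f : G ⟶ H) (hm : CategoryTheory.Mono f) :
    Function.Injective f.fV := by
  intro a b hab
  let P : IncHG := ⟨PUnit, PEmpty, PEmpty, PEmpty.elim, PEmpty.elim⟩
  let ga : P ⟶ G := ⟨fun _ => a, PEmpty.elim, PEmpty.elim, fun i => i.elim, fun i => i.elim⟩
  let gb : P ⟶ G := ⟨fun _ => b, PEmpty.elim, PEmpty.elim, fun i => i.elim, fun i => i.elim⟩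
  have h1 : ga ≫ f = gb ≫ f := by
    refine IncHG.Hom.ext ?_ ?_ ?_
    · exact funext fun _ => hab
    · exact funext fun x => x.elim
    · exact funext fun x => x.elim
  have h2 := (cancel_mono f).mp h1
  exact congrFun (congrArg IncHG.Hom.fV h2) PUnit.unit

lemma injE_of_mono {G H : IncHG} (f : G ⟶ H) (hm : CategoryTheory.Mono f) :
    Function.Injective f.fE := by
  intro a b hab
  let P : IncHG := ⟨PEmpty, PUnit, PEmpty, PEmpty.elim, PEmpty.elim⟩
  let ga : P ⟶ G := ⟨PEmpty.elim, fun _ => a, PEmpty.elim, fun i => i.elim, fun i => i.elim⟩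
  let gb : P ⟶ G := ⟨PEmpty.elim, fun _ => b, PEmpty.elim, fun i => i.elim, fun i => i.elim⟩
  have h1 : ga ≫ f = gb ≫ f := by
    refine IncHG.Hom.ext ?_ ?_ ?_
    · exact funext fun x => x.elim
    · exact funext fun _ => hab
    · exact funext fun x => x.elim
  have h2 := (cancel_mono f).mp h1
  exact congrFun (congrArg IncHG.Hom.fE h2) PUnit.unit

lemma injI_of_mono {G H : IncHG} (f : G ⟶ H) (hm : CategoryTheory.Mono f) :
    Function.Injective f.fI := by
  intro a b hab
  let P : IncHG := ⟨PUnit, PUnit, PUnit, fun _ => ⟨⟩, fun _ => ⟨⟩⟩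
  let ga : P ⟶ G := ⟨fun _ => G.vmap a, fun _ => G.emap a, fun _ => a, fun _ => rfl, fun _ => rfl⟩
  let gb : P ⟶ G := ⟨fun _ => G.vmap b, fun _ => G.emap b, fun _ => b, fun _ => rfl, fun _ => rfl⟩
  have h1 : ga ≫ f = gb ≫ f := by
    refine IncHG.Hom.ext ?_ ?_ ?_
    · refine funext fun _ => ?_
      show f.fV (G.vmap a) = f.fV (G.vmap b)
      rw [← f.comm_v, ← f.comm_v, hab]
    · refine funext fun _ => ?_
      show f.fE (G.emap a) = f.fE (G.emap b)
      rw [← f.comm_e, ← f.comm_e, hab]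
    · exact funext fun _ => hab
  have h2 := (cancel_mono f).mp h1
  exact congrFun (congrArg IncHG.Hom.fI h2) PUnit.unit

lemma loadV_nonempty (G : IncHG) : Nonempty (loadV G) := by
  rcases Classical.em (IsEmpty G.V) with h | h
  · exact ⟨Sum.inr ⟨h⟩⟩
  · exact ⟨Sum.inl (not_isEmpty_iff.mp h).some⟩

lemma loadE_nonempty (G : IncHG) : Nonempty (loadE G) := by
  rcases Classical.em (IsEmpty G.E) with h | h
  · exact ⟨Sum.inr ⟨h⟩⟩
  · exact ⟨Sum.inl (not_isEmpty_iff.mp h).some⟩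

lemma load_inc (G : IncHG) (v : loadV G) (e : loadE G) :
    ∃ a : (loadIH G).I, (loadIH G).vmap a = v ∧ (loadIH G).emap a = e := by
  by_cases h : ∃ i : G.I, Sum.inl (G.vmap i) = v ∧ Sum.inl (G.emap i) = e
  · obtain ⟨i, h1, h2⟩ := h
    exact ⟨Sum.inl i, h1, h2⟩
  · exact ⟨Sum.inr ⟨(v, e), h⟩, rfl, rfl⟩

open Classical in
noncomputable def extV (G : IncHG) {X Y : IncHG} (f : X ⟶ Y) (g : X ⟶ loadIH G) :
    Y.V → loadV G :=
  fun y => if h : ∃ x, f.fV x = y then g.fV h.choose else (loadV_nonempty G).some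

open Classical in
noncomputable def extE (G : IncHG) {X Y : IncHG} (f : X ⟶ Y) (g : X ⟶ loadIH G) :
    Y.E → loadE G :=
  fun y => if h : ∃ x, f.fE x = y then g.fE h.choose else (loadE_nonempty G).some

open Classical in
noncomputable def extI (G : IncHG) {X Y : IncHG} (f : X ⟶ Y) (g : X ⟶ loadIH G) :
    Y.I → (loadIH G).I :=
  fun i => if h : ∃ x, f.fI x = i then g.fI h.choose
    else (load_inc G (extV G f g (Y.vmap i)) (extE G f g (Y.emap i))).choose

lemma extV_f {G : IncHG} {X Y : IncHG} (f : X ⟶ Y) (g : X ⟶ loadIH G)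
    (injV : Function.Injective f.fV) (x : X.V) : extV G f g (f.fV x) = g.fV x := by
  have hex : ∃ x', f.fV x' = f.fV x := ⟨x, rfl⟩
  rw [extV]; exact (dif_pos hex).trans (congrArg g.fV (injV hex.choose_spec))

lemma extE_f {G : IncHG} {X Y : IncHG} (f : X ⟶ Y) (g : X ⟶ loadIH G)
    (injE : Function.Injective f.fE) (x : X.E) : extE G f g (f.fE x) = g.fE x := by
  have hex : ∃ x', f.fE x' = f.fE x := ⟨x, rfl⟩
  rw [extE]; exact (dif_pos hex).trans (congrArg g.fE (injE hex.choose_spec))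

lemma extI_f {G : IncHG} {X Y : IncHG} (f : X ⟶ Y) (g : X ⟶ loadIH G)
    (injI : Function.Injective f.fI) (x : X.I) : extI G f g (f.fI x) = g.fI x := by
  have hex : ∃ x', f.fI x' = f.fI x := ⟨x, rfl⟩
  rw [extI, dif_pos hex, injI hex.choose_spec]

lemma ext_comm_v {G : IncHG} {X Y : IncHG} (f : X ⟶ Y) (g : X ⟶ loadIH G)
    (injV : Function.Injective f.fV) (i : Y.I) :
    (loadIH G).vmap (extI G f g i) = extV G f g (Y.vmap i) := by
  by_cases h : ∃ x, f.fI x = i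
  · rw [extI, dif_pos h]
    have hspec := h.choose_spec
    revert hspec
    generalize h.choose = x
    intro hspec
    subst hspec
    rw [g.comm_v, f.comm_v, extV_f f g injV]
  · rw [extI, dif_neg h]
    exact (load_inc G _ _).choose_spec.1

lemma ext_comm_e {G : IncHG} {X Y : IncHG} (f : X ⟶ Y) (g : X ⟶ loadIH G)
    (injE : Function.Injective f.fE) (i : Y.I) :
    (loadIH G).emap (extI G f g i) = extE G f g (Y.emap i) := by
  by_cases h : ∃ x, f.fI x = i
  · rw [extI, dif_pos h]
    have hspec := h.choose_spec
    revert hspec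
    generalize h.choose = x
    intro hspec
    subst hspec
    rw [g.comm_e, f.comm_e, extE_f f g injE]
  · rw [extI, dif_neg h]
    exact (load_inc G _ _).choose_spec.2

lemma vmapImg_eq {G K : IncHG} (α : loadIH G ⟶ K) (x y : (loadIH G).I)
    (h : α.fI x = α.fI y) :
    α.fV ((loadIH G).vmap x) = α.fV ((loadIH G).vmap y) := by
  rw [← α.comm_v, ← α.comm_v, h]

lemma emapImg_eq {G K : IncHG} (α : loadIH G ⟶ K) (x y : (loadIH G).I)
    (h : α.fI x = α.fI y) :
    α.fE ((loadIH G).emap x) = α.fE ((loadIH G).emap y) := by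
  rw [← α.comm_e, ← α.comm_e, h]

/-- A monomorphism is essential if every morphism whose precomposition with it is
monic is itself monic. -/
def IncHG.Essential {G H : IncHG} (φ : G ⟶ H) : Prop :=
  ∀ (K : IncHG) (α : H ⟶ K), Mono (φ ≫ α) → Mono α

/-- The loading `L(G)` with the inclusion `j_G` is an injective envelope of `G`:
`j_G` is an essential monomorphism and `L(G)` is injective with respect to
monomorphisms. -/
theorem loadIH_injectiveEnvelope (G : IncHG) :
    Mono (jIH G) ∧ IncHG.Essential (jIH G) ∧ Injective (loadIH G) := by
  refine ⟨mono_of_inj _ Sum.inl_injective Sum.inl_injective Sum.inl_injective, ?_, ?_⟩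
  · -- essential
    intro K α hm
    have hV : Function.Injective (fun v : G.V => α.fV (Sum.inl v)) :=
      injV_of_mono (jIH G ≫ α) hm
    have hE : Function.Injective (fun e : G.E => α.fE (Sum.inl e)) :=
      injE_of_mono (jIH G ≫ α) hm
    have hI : Function.Injective (fun i : G.I => α.fI (Sum.inl i)) :=
      injI_of_mono (jIH G ≫ α) hm
    have hαV : Function.Injective α.fV := by
      rintro (a | a) (b | b) h
      · exact congrArg Sum.inl (hV h)
      · exact (b.down.false a).elim
      · exact (a.down.false b).elim
      · exact congrArg Sum.inr (Subsingleton.elim a b)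
    have hαE : Function.Injective α.fE := by
      rintro (a | a) (b | b) h
      · exact congrArg Sum.inl (hE h)
      · exact (b.down.false a).elim
      · exact (a.down.false b).elim
      · exact congrArg Sum.inr (Subsingleton.elim a b)
    have hαI : Function.Injective α.fI := by
      rintro (a | a) (b | b) h
      · exact congrArg Sum.inl (hI h)
      · exfalso
        apply b.2
        exact ⟨a, hαV (vmapImg_eq α _ _ h), hαE (emapImg_eq α _ _ h)⟩
      · exfalso
        apply a.2
        exact ⟨b, hαV (vmapImg_eq α _ _ h.symm), hαE (emapImg_eq α _ _ h.symm)⟩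
      · have hv : a.1.1 = b.1.1 := hαV (vmapImg_eq α _ _ h)
        have he : a.1.2 = b.1.2 := hαE (emapImg_eq α _ _ h)
        exact congrArg Sum.inr (Subtype.ext (Prod.ext hv he))
    exact mono_of_inj α hαV hαE hαI
  · -- injective
    constructor
    intro X Y g f hf
    have injV := injV_of_mono f hf
    have injE := injE_of_mono f hf
    have injI := injI_of_mono f hf
    refine ⟨⟨extV G f g, extE G f g, extI G f g,
      ext_comm_v f g injV, ext_comm_e f g injE⟩, ?_⟩
    refine IncHG.Hom.ext ?_ ?_ ?_
    · exact funext fun x => extV_f f g injV x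
    · exact funext fun x => extE_f f g injE x
    · exact funext fun x => extI_f f g injI x
end
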